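/- For any matroid P on U and Q on V with U, V disjoint, the restriction of the free product satisfies (P □ Q)|U = P and the contraction satisfies (P □ Q)/U = Q. -/

import Mathlib

open Matroid

variable {α : Type*}

/-- The contraction `M / C` of a matroid by a set, defined as the dual of the
deletion (restriction to the complement) of the dual. Its ground set is `M.E \ C`. -/
def Matroid.con (M : Matroid α) (C : Set α) : Matroid α := (M✶ ↾ (M.E \ C))✶

/-- The rank `ρ(M)` of a matroid (as a value in `ℕ∞`): the common cardinality of its bases. -/
noncomputable def Matroid.erank (M : Matroid α) : ℕ∞ := ⨆ B ∈ {B | M.IsBase B}, B.encard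

/-- The rank function `ρ_M(X)` of a matroid: the rank of the restriction to `X`. -/
noncomputable def Matroid.rnk (M : Matroid α) (X : Set α) : ℕ∞ := (M ↾ X).erank

/-- `IsFreeProduct M N P` says that `P` is the free product `M □ N`: its ground set is
`M.E ∪ N.E`, and its bases are exactly the sets `B ⊆ M.E ∪ N.E` of cardinality
`ρ(M) + ρ(N)` such that `B ∩ M.E` is independent in `M` and `B ∩ N.E` spans `N`. -/
def IsFreeProduct (M N P : Matroid α) : Prop :=
  P.E = M.E ∪ N.E ∧ ∀ B : Set α,
    (P.IsBase B ↔ B ⊆ M.E ∪ N.E ∧ B.encard = M.erank + N.erank ∧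
      M.Indep (B ∩ M.E) ∧ N.Spanning (B ∩ N.E))

/-- The rank-preserving weak order on matroids: `M ≤ N` iff `M` and `N` have the same
ground set and every base of `M` is a base of `N`. -/
def weakLE (M N : Matroid α) : Prop := M.E = N.E ∧ ∀ B, M.IsBase B → N.IsBase B

/-- Every base of `M` has cardinality `M.erank`. -/
lemma erank_eq_encard {M : Matroid α} {B : Set α} (hB : M.IsBase B) : M.erank = B.encard := by
  refine le_antisymm (iSup₂_le fun B' hB' => (hB'.encard_eq_encard_of_isBase hB).le) ?_
  exact le_iSup₂ (f := fun (B' : Set α) (_ : B' ∈ {B | M.IsBase B}) => B'.encard) B hB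

/-- The union of a base of `P` and a base of `Q` is a base of the free product. -/
lemma union_base_of_freeProduct {P Q F : Matroid α} (h : Disjoint P.E Q.E)
    (hF : IsFreeProduct P Q F) {BP BQ : Set α} (hBP : P.IsBase BP) (hBQ : Q.IsBase BQ) :
    F.IsBase (BP ∪ BQ) := by
  have hPE : BP ⊆ P.E := hBP.subset_ground
  have hQE : BQ ⊆ Q.E := hBQ.subset_ground
  have hdisj : Disjoint BP BQ := h.mono hPE hQE
  have h1 : (BP ∪ BQ) ∩ P.E = BP := by
    rw [Set.union_inter_distrib_right, Set.inter_eq_left.2 hPE,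
      ((h.symm.mono hQE le_rfl).inter_eq), Set.union_empty]
  have h2 : (BP ∪ BQ) ∩ Q.E = BQ := by
    rw [Set.union_inter_distrib_right, Set.inter_eq_left.2 hQE,
      ((h.mono hPE le_rfl).inter_eq), Set.empty_union]
  refine (hF.2 _).2 ⟨Set.union_subset_union hPE hQE, ?_, ?_, ?_⟩
  · rw [Set.encard_union_eq hdisj, erank_eq_encard hBP, erank_eq_encard hBQ]
  · rw [h1]; exact hBP.indep
  · rw [h2]; exact hBQ.spanning

/-- for matroids `P` on `U` and `Q` on `V` with `U, V` disjoint, the free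
product satisfies `(P □ Q)|U = P` and `(P □ Q)/U = Q`. -/
theorem freeProduct_restrict_contract
    (P Q : Matroid α) (hP : P.E.Finite) (hQ : Q.E.Finite) (h : Disjoint P.E Q.E)
    (F : Matroid α) (hF : IsFreeProduct P Q F) :
    F ↾ P.E = P ∧ F.con P.E = Q := by
  constructor
  · refine ext_indep (by simp) fun I hI => ?_
    simp only [restrict_ground_eq] at hI
    rw [restrict_indep_iff]
    constructor
    · rintro ⟨hFI, hIP⟩
      obtain ⟨B, hB, hIB⟩ := hFI.exists_isBase_superset
      exact ((hF.2 B).1 hB).2.2.1.subset (Set.subset_inter hIB hIP)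
    · intro hPI
      obtain ⟨BP, hBP, hIBP⟩ := hPI.exists_isBase_superset
      obtain ⟨BQ, hBQ⟩ := Q.exists_isBase
      exact ⟨(union_base_of_freeProduct h hF hBP hBQ).indep.subset
        (hIBP.trans Set.subset_union_left), hPI.subset_ground⟩
  · have hVE : F.E \ P.E = Q.E := by
      rw [hF.1, Set.union_diff_left, h.symm.sdiff_eq_left]
    have key : F✶ ↾ (F.E \ P.E) = Q✶ := by
      rw [hVE]
      refine ext_indep (by simp) fun I hI => ?_
      simp only [restrict_ground_eq] at hI
      rw [restrict_indep_iff, dual_indep_iff_exists', dual_indep_iff_exists' (M := Q),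
        and_iff_right (hI.trans (hF.1 ▸ Set.subset_union_right)), and_iff_right hI,
        and_iff_left hI]
      constructor
      · rintro ⟨B, hB, hIB⟩
        obtain ⟨B0, hB0, hB0s⟩ := ((hF.2 B).1 hB).2.2.2.exists_isBase_subset
        exact ⟨B0, hB0, hIB.mono_right (hB0s.trans Set.inter_subset_left)⟩
      · rintro ⟨B0, hB0, hIB0⟩
        obtain ⟨BP, hBP⟩ := P.exists_isBase
        refine ⟨BP ∪ B0, union_base_of_freeProduct h hF hBP hB0, ?_⟩
        exact Set.disjoint_union_right.2 ⟨(h.symm.mono hI hBP.subset_ground), hIB0⟩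
    rw [Matroid.con, key, dual_dual]
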